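/- Let A be a real square matrix, r a complex number with Im(r) ≠ 0, and suppose (rI − A) and (r̄I − A) are invertible. If y solves (rI − A)y = g for a real vector g, then the real vector x = −Im(y)/Im(r) solves (rI − A)(r̄I − A)x = g. -/

import Mathlib

open Matrix

theorem complex_pair_real_solution (n : ℕ) (A : Matrix (Fin n) (Fin n) ℝ)
    (r : ℂ) (hr : r.im ≠ 0)
    (h1 : IsUnit (r • (1 : Matrix (Fin n) (Fin n) ℂ) - A.map Complex.ofReal).det)
    (h2 : IsUnit ((starRingEnd ℂ) r • (1 : Matrix (Fin n) (Fin n) ℂ) - A.map Complex.ofReal).det)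
    (g : Fin n → ℝ) (y : Fin n → ℂ)
    (hy : (r • (1 : Matrix (Fin n) (Fin n) ℂ) - A.map Complex.ofReal) *ᵥ y =
      fun i => (g i : ℂ)) :
    ((r • (1 : Matrix (Fin n) (Fin n) ℂ) - A.map Complex.ofReal) *
        ((starRingEnd ℂ) r • (1 : Matrix (Fin n) (Fin n) ℂ) - A.map Complex.ofReal)) *ᵥ
      (fun i => ((-(y i).im / r.im : ℝ) : ℂ)) = fun i => (g i : ℂ) := by
  set B := r • (1 : Matrix (Fin n) (Fin n) ℂ) - A.map Complex.ofReal with hB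
  set C := (starRingEnd ℂ) r • (1 : Matrix (Fin n) (Fin n) ℂ) - A.map Complex.ofReal with hC
  set yc : Fin n → ℂ := fun i => (starRingEnd ℂ) (y i) with hyc
  have hrr : r - (starRingEnd ℂ) r ≠ 0 := by
    simp [Complex.ext_iff, sub_eq_zero, eq_comm, Complex.conj_im]
    intro h
    exact hr (by linarith)
  -- conjugated equation : C *ᵥ yc = g
  have hCyc : C *ᵥ yc = fun i => (g i : ℂ) := by
    funext i
    have h := congrFun hy i
    have h2 : (starRingEnd ℂ) ((B *ᵥ y) i) = (C *ᵥ yc) i := by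
      simp [mulVec, dotProduct, map_sum, hB, hC, hyc, Matrix.sub_apply, Matrix.smul_apply,
        one_apply, map_apply, apply_ite, mul_comm]
    rw [← h2, h]
    simp
  -- C = B + (conj r - r) • 1
  have hCB : C = B + ((starRingEnd ℂ) r - r) • (1 : Matrix (Fin n) (Fin n) ℂ) := by
    rw [hB, hC]
    module
  have hCy : C *ᵥ y = (fun i => (g i : ℂ)) + ((starRingEnd ℂ) r - r) • y := by
    rw [hCB, add_mulVec, hy, smul_mulVec, one_mulVec]
  -- x = (r - conj r)⁻¹ • (yc - y)
  have hx : (fun i => ((-(y i).im / r.im : ℝ) : ℂ)) =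
      (r - (starRingEnd ℂ) r)⁻¹ • (yc - y) := by
    funext i
    have hsub : yc i - y i = -(2 * (y i).im * Complex.I) := by
      have := Complex.sub_conj (y i)
      rw [hyc]; push_cast at this ⊢; linear_combination -this
    have hr2 : r - (starRingEnd ℂ) r = 2 * r.im * Complex.I := by
      have := Complex.sub_conj r
      push_cast at this ⊢; linear_combination this
    have hne : (2 * (r.im : ℂ) * Complex.I) ≠ 0 := by
      simp [Complex.ext_iff, hr]
    simp only [Pi.smul_apply, Pi.sub_apply, hsub, hr2, smul_eq_mul]
    rw [inv_mul_eq_div, eq_div_iff hne]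
    push_cast
    have : (r.im : ℂ) ≠ 0 := by exact_mod_cast hr
    field_simp
  have hCx : C *ᵥ (fun i => ((-(y i).im / r.im : ℝ) : ℂ)) = y := by
    rw [hx, mulVec_smul, mulVec_sub, hCyc, hCy]
    funext i
    simp only [Pi.smul_apply, Pi.sub_apply, Pi.add_apply, smul_eq_mul]
    field_simp
    ring
  rw [← mulVec_mulVec, hCx, hy]
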